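/- Let μ₂, μ₃, μ₅, μ₆ be real numbers and set λ₁ = μ₂ − μ₃ and λ₂ = μ₅ − μ₆, and assume λ₁ ≠ 0 and Parodi's relation μ₂ + μ₃ = μ₆ − μ₅. Let A be a symmetric real 3×3 matrix, B a skew-symmetric real 3×3 matrix, and d, v ∈ ℝ³. Define the vector Md for a matrix M by (Md)_i = Σ_k M_{ki} d_k, the tensor (x ⊗ y)_{ij} = x_i y_j, and M : N = Σ_{ij} M_{ij} N_{ij}. Let C_u = μ₂ (v + Bd) ⊗ d + μ₃ d ⊗ (v + Bd) + μ₅ (Ad) ⊗ d + μ₆ d ⊗ (Ad) and C_d = λ₁ Bd + λ₂ Ad. Then −C_u : (A + B) + C_d · v = λ₁ |v + Bd + (λ₂/λ₁) Ad|² − λ₁ |v|² − (μ₅ + μ₆ + λ₂²/λ₁) |Ad|². -/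
import Mathlib


open Matrix

/-- The key cancellation identity between the Leslie stress `C_u` and the director
forcing `C_d` of the Ericksen–Leslie system, under Parodi's relation. Here
`(Md)_i = ∑ k, M k i * d k`, `λ₁ = μ₂ - μ₃`, `λ₂ = μ₅ - μ₆`. -/
theorem stmt4 (μ₂ μ₃ μ₅ μ₆ : ℝ)
    (hlam : μ₂ - μ₃ ≠ 0) (hParodi : μ₂ + μ₃ = μ₆ - μ₅)
    (A B : Matrix (Fin 3) (Fin 3) ℝ) (hA : Aᵀ = A) (hB : Bᵀ = -B)
    (d v : Fin 3 → ℝ) :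
    -(∑ i, ∑ j,
        (μ₂ * (v i + ∑ k, B k i * d k) * d j
          + μ₃ * d i * (v j + ∑ k, B k j * d k)
          + μ₅ * (∑ k, A k i * d k) * d j
          + μ₆ * d i * (∑ k, A k j * d k)) * (A i j + B i j))
      + ∑ i, ((μ₂ - μ₃) * (∑ k, B k i * d k) + (μ₅ - μ₆) * (∑ k, A k i * d k)) * v i
    = (μ₂ - μ₃) *
        ∑ i, (v i + (∑ k, B k i * d k)
                + ((μ₅ - μ₆) / (μ₂ - μ₃)) * (∑ k, A k i * d k)) ^ 2
      - (μ₂ - μ₃) * ∑ i, (v i) ^ 2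
      - (μ₅ + μ₆ + (μ₅ - μ₆) ^ 2 / (μ₂ - μ₃)) * ∑ i, (∑ k, A k i * d k) ^ 2 := by
  have hA' : ∀ i j, A j i = A i j := fun i j => congrFun (congrFun hA i) j
  have hB' : ∀ i j, B j i = -B i j := fun i j => congrFun (congrFun hB i) j
  have hP : μ₃ = μ₆ - μ₅ - μ₂ := by linarith
  subst hP
  simp only [Fin.sum_univ_three]
  rw [hA' 0 1, hA' 0 2, hA' 1 2, hB' 0 1, hB' 0 2, hB' 1 2,
    show B 0 0 = 0 by have := hB' 0 0; linarith,
    show B 1 1 = 0 by have := hB' 1 1; linarith,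
    show B 2 2 = 0 by have := hB' 2 2; linarith]
  field_simp
  ring
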